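/- Loewner's derivative formula (power series form): for n ≥ 2, a formal power series f(t) = Σ_{M≥0} f_M t^M, and u ∈ R^n, the lowest-order term of Δ(t) := det(f(t u_i u_j))_{i,j=1}^n is t^{C(n,2)} · ∏_{i<j}(u_j − u_i)^2 · f_0 f_1 ··· f_{n−1}; i.e., the coefficient of t^k in Δ(t) vanishes for 0 ≤ k < C(n,2), and the coefficient of t^{C(n,2)} equals ∏_{i<j}(u_j − u_i)^2 · ∏_{M=0}^{n−1} f_M. -/

import Mathlib

open Finset PowerSeries

private lemma strictMono_le_apply' {n : ℕ} {f : Fin n → ℕ} (hf : StrictMono f) (i : Fin n) :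
    (i : ℕ) ≤ f i := by
  obtain ⟨m, hm⟩ := i
  induction m with
  | zero => exact Nat.zero_le _
  | succ m ih =>
    have h1 : (⟨m, by omega⟩ : Fin n) < (⟨m + 1, hm⟩ : Fin n) := by simp [Fin.lt_def]
    have h2 := ih (by omega)
    have h3 := hf h1
    simpa using Nat.lt_of_le_of_lt h2 h3

private lemma sum_fin_id' (n : ℕ) : ∑ i : Fin n, (i : ℕ) = n.choose 2 := by
  have h : ∑ i : Fin n, (i : ℕ) = ∑ i ∈ range n, i := Fin.sum_univ_eq_sum_range (fun i => i) n
  rw [h, Nat.choose_two_right]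
  have := Finset.sum_range_id_mul_two n
  omega

private lemma inj_sum_bound' {n : ℕ} (l : Fin n → ℕ) (hinj : Function.Injective l) :
    n.choose 2 ≤ ∑ i, l i ∧ (∑ i, l i = n.choose 2 → ∀ i, l i < n) := by
  set σ := Tuple.sort l with hσ
  have hmono : Monotone (l ∘ σ) := Tuple.monotone_sort l
  have hsm : StrictMono (l ∘ σ) := hmono.strictMono_of_injective (hinj.comp σ.injective)
  have hle : ∀ i : Fin n, (i : ℕ) ≤ (l ∘ σ) i := fun i => strictMono_le_apply' hsm i
  have hsum : ∑ i, (l ∘ σ) i = ∑ i, l i := Equiv.sum_comp σ l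
  have h1 : ∑ i : Fin n, (i : ℕ) ≤ ∑ i, l i := by
    rw [← hsum]; exact Finset.sum_le_sum fun i _ => hle i
  rw [sum_fin_id'] at h1
  refine ⟨h1, fun heq i => ?_⟩
  have hall := (Finset.sum_eq_sum_iff_of_le (fun i _ => hle i)).mp
    (by rw [hsum, heq, sum_fin_id'])
  have h2 := hall (σ.symm i) (mem_univ _)
  simp only [Function.comp_apply, Equiv.apply_symm_apply] at h2
  rw [← h2]
  exact (σ.symm i).isLt

private lemma coeff_det_eq' {R : Type*} [CommRing R] {n : ℕ} (u : Fin n → R) (fc : ℕ → R)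
    (k : ℕ) :
    PowerSeries.coeff (R := R) k (Matrix.det (Matrix.of fun i j : Fin n =>
      PowerSeries.mk fun M => fc M * (u i * u j) ^ M)) =
    ∑ l ∈ Finset.finsuppAntidiag Finset.univ k,
      (∏ i, fc (l i) * u i ^ (l i)) *
        Matrix.det (Matrix.of fun i j : Fin n => u i ^ (l j : ℕ)) := by
  classical
  rw [Matrix.det_apply, map_sum]
  have step1 : ∀ σ : Equiv.Perm (Fin n),
      PowerSeries.coeff (R := R) k (Equiv.Perm.sign σ •
        ∏ i, (Matrix.of fun i j : Fin n =>
          PowerSeries.mk fun M => fc M * (u i * u j) ^ M) (σ i) i)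
      = ∑ l ∈ Finset.finsuppAntidiag (Finset.univ : Finset (Fin n)) k,
          Equiv.Perm.sign σ • ∏ i, fc (l i) * (u (σ i) * u i) ^ (l i) := by
    intro σ
    rw [Units.smul_def, map_zsmul, PowerSeries.coeff_prod, Finset.smul_sum]
    refine Finset.sum_congr rfl fun l _ => ?_
    rw [Units.smul_def]
    congr 1
    refine Finset.prod_congr rfl fun i _ => ?_
    simp [PowerSeries.coeff_mk, Matrix.of_apply]
  rw [Finset.sum_congr rfl fun σ _ => step1 σ, Finset.sum_comm]
  refine Finset.sum_congr rfl fun l _ => ?_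
  rw [Matrix.det_apply, Finset.mul_sum]
  refine Finset.sum_congr rfl fun σ _ => ?_
  rw [mul_smul_comm]
  congr 1
  rw [← Finset.prod_mul_distrib]
  refine Finset.prod_congr rfl fun i _ => ?_
  simp only [Matrix.of_apply]
  rw [mul_pow]
  ring

/-- Loewner's formula (power series form): for `n ≥ 2`, `u ∈ R^n`, and
`Δ(t) = det (f(t u_i u_j))_{i,j}` with `f(t) = ∑_M f_M t^M`, the coefficient of `t^k`
in `Δ` vanishes for `k < C(n,2)`, and the coefficient of `t^{C(n,2)}` equals
`∏_{i<j} (u_j - u_i)^2 · f_0 f_1 ⋯ f_{n-1}`. -/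
theorem stmt15 (R : Type*) [CommRing R] (n : ℕ) (hn : 2 ≤ n)
    (u : Fin n → R) (fc : ℕ → R) :
    (∀ k : ℕ, k < n.choose 2 →
      (PowerSeries.coeff (R := R) k)
        (Matrix.det (Matrix.of fun i j : Fin n =>
          PowerSeries.mk fun M => fc M * (u i * u j) ^ M)) = 0) ∧
    (PowerSeries.coeff (R := R) (n.choose 2))
        (Matrix.det (Matrix.of fun i j : Fin n =>
          PowerSeries.mk fun M => fc M * (u i * u j) ^ M)) =
      (∏ i : Fin n, ∏ j ∈ Finset.Ioi i, (u j - u i) ^ 2) *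
      ∏ M ∈ Finset.range n, fc M := by
  classical
  constructor
  · intro k hk
    rw [coeff_det_eq']
    refine Finset.sum_eq_zero fun l hl => ?_
    by_cases hinj : Function.Injective fun i : Fin n => l i
    · exfalso
      have hmem : (∑ i, l i) = k := (Finset.mem_finsuppAntidiag.mp hl).1
      have hge := (inj_sum_bound' (fun i => l i) hinj).1
      omega
    · obtain ⟨a, b, hab, hne⟩ := Function.not_injective_iff.mp hinj
      have : Matrix.det (Matrix.of fun i j : Fin n => u i ^ (l j : ℕ)) = 0 :=
        Matrix.det_zero_of_column_eq hne fun k => by simp [hab]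
      rw [this, mul_zero]
  · rw [coeff_det_eq']
    have hV : ∀ σ : Equiv.Perm (Fin n),
        Matrix.det (Matrix.of fun i j : Fin n => u i ^ ((σ j : Fin n) : ℕ)) =
          ((Equiv.Perm.sign σ : ℤ) : R) * Matrix.det (Matrix.vandermonde u) := by
      intro σ
      have hmat : (Matrix.of fun i j : Fin n => u i ^ ((σ j : Fin n) : ℕ)) =
          (Matrix.vandermonde u).submatrix id σ := rfl
      rw [hmat, Matrix.det_permute']
    rw [← Finset.sum_filter_of_ne
      (p := fun l : Fin n →₀ ℕ => Function.Injective fun i : Fin n => l i)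
      (fun l hl hne => by
        by_contra hinj
        obtain ⟨a, b, hab, habne⟩ := Function.not_injective_iff.mp hinj
        exact hne (by
          rw [show Matrix.det (Matrix.of fun i j : Fin n => u i ^ (l j : ℕ)) = 0 from
            Matrix.det_zero_of_column_eq habne fun k => by simp [hab], mul_zero]))]
    have hbij : (∑ l ∈ Finset.filter (fun l : Fin n →₀ ℕ =>
          Function.Injective fun i : Fin n => l i)
            (Finset.finsuppAntidiag Finset.univ (n.choose 2)),
        (∏ i, fc (l i) * u i ^ (l i)) *
          Matrix.det (Matrix.of fun i j : Fin n => u i ^ (l j : ℕ))) =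
        ∑ σ : Equiv.Perm (Fin n),
          (∏ i, fc ((σ i : Fin n) : ℕ) * u i ^ ((σ i : Fin n) : ℕ)) *
            Matrix.det (Matrix.of fun i j : Fin n => u i ^ ((σ j : Fin n) : ℕ)) := by
      refine Finset.sum_bij'
        (i := fun l hl => Equiv.ofBijective
          (fun x : Fin n => (⟨l x, by
            have hm := Finset.mem_filter.mp hl
            have hsum : (∑ i, l i) = n.choose 2 := (Finset.mem_finsuppAntidiag.mp hm.1).1
            exact (inj_sum_bound' (fun i => l i) hm.2).2 hsum x⟩ : Fin n))
          (Finite.injective_iff_bijective.mp fun a b h => by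
            have hm := Finset.mem_filter.mp hl
            exact hm.2 (congrArg Fin.val h)))
        (j := fun σ _ => Finsupp.equivFunOnFinite.symm fun x : Fin n => ((σ x : Fin n) : ℕ))
        (hi := fun _ _ => Finset.mem_univ _)
        (hj := fun σ _ => ?_) (left_neg := fun l hl => ?_) (right_neg := fun σ hσ => ?_)
        (h := fun l hl => ?_)
      · refine Finset.mem_filter.mpr ⟨Finset.mem_finsuppAntidiag.mpr ⟨?_, by simp⟩, ?_⟩
        · show (∑ x : Fin n, ((σ x : Fin n) : ℕ)) = n.choose 2
          rw [show (∑ x : Fin n, ((σ x : Fin n) : ℕ)) = ∑ i : Fin n, (i : ℕ) from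
            Equiv.sum_comp σ (fun i : Fin n => (i : ℕ)), sum_fin_id']
        · intro a b hab
          simp only [Finsupp.equivFunOnFinite_symm_apply_apply] at hab
          exact σ.injective (Fin.val_injective hab)
      · ext x
        simp [Equiv.ofBijective]
      · ext x
        simp [Equiv.ofBijective]
      · simp only [Equiv.ofBijective_apply, Finsupp.equivFunOnFinite_symm_apply_apply]
    rw [hbij]
    have hterm : ∀ σ : Equiv.Perm (Fin n),
        (∏ i, fc ((σ i : Fin n) : ℕ) * u i ^ ((σ i : Fin n) : ℕ)) *
          Matrix.det (Matrix.of fun i j : Fin n => u i ^ ((σ j : Fin n) : ℕ)) =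
        ((∏ M ∈ Finset.range n, fc M) * Matrix.det (Matrix.vandermonde u)) *
          (((Equiv.Perm.sign σ : ℤ) : R) * ∏ i, u i ^ ((σ i : Fin n) : ℕ)) := by
      intro σ
      rw [hV σ, Finset.prod_mul_distrib]
      rw [show (∏ i, fc ((σ i : Fin n) : ℕ)) = ∏ i : Fin n, fc (i : ℕ) from
        Equiv.prod_comp σ (fun i : Fin n => fc (i : ℕ))]
      rw [Fin.prod_univ_eq_prod_range (fun M => fc M) n]
      ring
    rw [Finset.sum_congr rfl fun σ _ => hterm σ, ← Finset.mul_sum]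
    have hdet2 : (∑ σ : Equiv.Perm (Fin n),
        ((Equiv.Perm.sign σ : ℤ) : R) * ∏ i, u i ^ ((σ i : Fin n) : ℕ)) =
        Matrix.det (Matrix.vandermonde u) := by
      rw [← Matrix.det_transpose (Matrix.vandermonde u), Matrix.det_apply']
      rfl
    rw [hdet2, Matrix.det_vandermonde]
    rw [show (∏ i : Fin n, ∏ j ∈ Finset.Ioi i, (u j - u i) ^ 2) =
      (∏ i : Fin n, ∏ j ∈ Finset.Ioi i, (u j - u i)) ^ 2 by
        simp [Finset.prod_pow]]
    ring
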